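/- For every integer ℓ ≥ 1 and every real σ > 0, the family of nonnegative reals ⟨n₁ + ⋯ + n_ℓ⟩^{−2σ} · ∏_{j=1}^ℓ ⟨n_j⟩^{−2}, indexed by tuples (n₁,…,n_ℓ) ∈ (ℤ²)^ℓ, is summable; that is, ∑_{(n₁,…,n_ℓ)∈(ℤ²)^ℓ} ⟨n₁+⋯+n_ℓ⟩^{−2σ} ∏_{j=1}^ℓ ⟨n_j⟩^{−2} < ∞. -/

import Mathlib

open scoped ENNReal

/-- The Japanese bracket `⟨n⟩ = (1+|n|²)^{1/2}` of a lattice point `n ∈ ℤ²`. -/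
noncomputable def jb (n : ℤ × ℤ) : ℝ :=
  Real.sqrt (1 + ((n.1 : ℝ) ^ 2 + (n.2 : ℝ) ^ 2))

lemma one_le_jb (n : ℤ × ℤ) : 1 ≤ jb n := by
  rw [jb, Real.one_le_sqrt]
  nlinarith [sq_nonneg ((n.1:ℝ)), sq_nonneg ((n.2:ℝ))]

lemma jb_pos (n : ℤ × ℤ) : 0 < jb n := lt_of_lt_of_le one_pos (one_le_jb n)

lemma jb_sq (n : ℤ × ℤ) : jb n ^ 2 = 1 + ((n.1 : ℝ) ^ 2 + (n.2 : ℝ) ^ 2) :=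
  Real.sq_sqrt (by positivity)

lemma jb_neg (n : ℤ × ℤ) : jb (-n) = jb n := by
  simp [jb]

lemma jb_triangle (a b : ℤ × ℤ) : jb (a + b) ≤ jb a + jb b := by
  have hA := jb_sq a
  have hB := jb_sq b
  have hA0 := (jb_pos a).le
  have hB0 := (jb_pos b).le
  have key : 1 + (((a+b).1 : ℝ) ^ 2 + ((a+b).2 : ℝ) ^ 2) ≤ (jb a + jb b) ^ 2 := by
    have hcs : (1 + (a.1:ℝ) * b.1 + (a.2:ℝ) * b.2) ^ 2 ≤ (jb a * jb b) ^ 2 := by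
      have h2 : (jb a * jb b) ^ 2 = (1 + ((a.1:ℝ)^2 + (a.2:ℝ)^2)) * (1 + ((b.1:ℝ)^2 + (b.2:ℝ)^2)) := by
        rw [mul_pow, hA, hB]
      rw [h2]
      nlinarith [sq_nonneg ((a.1:ℝ) - (b.1:ℝ)), sq_nonneg ((a.2:ℝ) - (b.2:ℝ)),
        sq_nonneg ((a.1:ℝ) * (b.2:ℝ) - (a.2:ℝ) * (b.1:ℝ))]
    have hab : 0 ≤ jb a * jb b := mul_nonneg hA0 hB0
    simp only [Prod.fst_add, Prod.snd_add]
    push_cast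
    nlinarith [hcs, hab, sq_nonneg (jb a * jb b + (1 + (a.1:ℝ) * b.1 + (a.2:ℝ) * b.2))]
  calc jb (a + b) ≤ Real.sqrt ((jb a + jb b) ^ 2) := Real.sqrt_le_sqrt key
    _ = jb a + jb b := Real.sqrt_sq (by positivity)

open Real in
/-- antitone in base for negative exponents -/
lemma rpow_neg_le_rpow_neg {x y t : ℝ} (hx : 0 < x) (hxy : x ≤ y) (ht : 0 ≤ t) :
    y ^ (-t) ≤ x ^ (-t) := by
  rw [Real.rpow_neg (hx.trans_le hxy).le, Real.rpow_neg hx.le]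
  exact inv_anti₀ (Real.rpow_pos_of_pos hx t) (Real.rpow_le_rpow hx.le hxy ht)

/-- 1D summability -/
lemma summable_1d {s : ℝ} (hs : 2 < s) :
    Summable (fun k : ℤ => (1 + (k:ℝ) ^ 2) ^ (-(s/4))) := by
  have h1 : Summable (fun k : ℤ => |(k:ℝ)| ^ (-(s/2)) + if k = 0 then (1:ℝ) else 0) := by
    apply Summable.add (Real.summable_abs_int_rpow (by linarith))
    exact summable_of_ne_finset_zero (s := {0}) (by intro k hk; simp at hk; simp [hk])
  apply Summable.of_nonneg_of_le (fun k => by positivity) _ h1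
  intro k
  rcases eq_or_ne k 0 with rfl | hk
  · simp
    positivity
  · have hk1 : (1:ℝ) ≤ |(k:ℝ)| := by
      have : (1:ℤ) ≤ |k| := Int.one_le_abs (by omega)
      calc (1:ℝ) ≤ (|k| : ℤ) := by exact_mod_cast this
        _ = |(k:ℝ)| := by push_cast; rfl
    have h2 : |(k:ℝ)| ^ (s/2) ≤ (1 + (k:ℝ)^2) ^ (s/4) := by
      have : |(k:ℝ)| ^ (s/2) = ((k:ℝ)^2) ^ (s/4) := by
        rw [show (s/2) = 2 * (s/4) by ring, Real.rpow_mul (abs_nonneg _),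
          Real.rpow_two, sq_abs]
      rw [this]
      exact Real.rpow_le_rpow (by positivity) (by nlinarith) (by linarith)
    have hpos : (0:ℝ) < |(k:ℝ)| := by positivity
    simp only [if_neg hk, add_zero]
    rw [Real.rpow_neg (by positivity), Real.rpow_neg (abs_nonneg _)]
    exact inv_anti₀ (by positivity) h2

/-- 2D base summability -/
lemma summable_jb_rpow {s : ℝ} (hs : 2 < s) :
    Summable (fun n : ℤ × ℤ => jb n ^ (-s)) := by
  have hprod : Summable (fun n : ℤ × ℤ =>
      (1 + (n.1:ℝ) ^ 2) ^ (-(s/4)) * (1 + (n.2:ℝ) ^ 2) ^ (-(s/4))) :=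
    (summable_1d hs).mul_of_nonneg (summable_1d hs)
      (Pi.le_def.mpr fun k => by positivity) (Pi.le_def.mpr fun k => by positivity)
  apply Summable.of_nonneg_of_le (fun n => Real.rpow_nonneg (jb_pos n).le _) _ hprod
  intro n
  set a := (n.1 : ℝ); set b := (n.2 : ℝ)
  have key : ((1+a^2) * (1+b^2)) ^ (s/4) ≤ jb n ^ s := by
    have h1 : jb n ^ s = (jb n ^ (4:ℕ)) ^ (s/4) := by
      rw [← Real.rpow_natCast (jb n) 4, ← Real.rpow_mul (jb_pos n).le]
      norm_num
      ring_nf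
    rw [h1]
    apply Real.rpow_le_rpow (by positivity) _ (by linarith)
    have h2 : jb n ^ (4:ℕ) = (jb n ^ 2) ^ 2 := by ring
    rw [h2, jb_sq]
    nlinarith [sq_nonneg (a^2 - b^2), sq_nonneg a, sq_nonneg b, sq_nonneg (a*b)]
  calc jb n ^ (-s) = (jb n ^ s)⁻¹ := Real.rpow_neg (jb_pos n).le s
    _ ≤ (((1+a^2) * (1+b^2)) ^ (s/4))⁻¹ := inv_anti₀ (by positivity) key
    _ = (1 + a ^ 2) ^ (-(s/4)) * (1 + b ^ 2) ^ (-(s/4)) := by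
        rw [Real.mul_rpow (by positivity) (by positivity)]
        rw [Real.rpow_neg (by positivity), Real.rpow_neg (by positivity), mul_inv]

open ENNReal in
/-- `F s n = ⟨n⟩^{-s}` as an extended nonneg real. -/
noncomputable def F (s : ℝ) (n : ℤ × ℤ) : ℝ≥0∞ := ENNReal.ofReal (jb n ^ (-s))

lemma F_mono {s t : ℝ} (hst : s ≤ t) (n : ℤ × ℤ) : F t n ≤ F s n :=
  ENNReal.ofReal_le_ofReal
    (Real.rpow_le_rpow_of_exponent_le (one_le_jb n) (by linarith))

lemma F_ne_top (s : ℝ) (n : ℤ × ℤ) : F s n ≠ ⊤ := ENNReal.ofReal_ne_top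

lemma tsum_F_ne_top {s : ℝ} (hs : 2 < s) : ∑' n, F s n ≠ ⊤ := by
  simp only [F]
  rw [← ENNReal.ofReal_tsum_of_nonneg (fun n => Real.rpow_nonneg (jb_pos n).le _)
    (summable_jb_rpow hs)]
  exact ENNReal.ofReal_ne_top

/-- translation invariance -/
lemma tsum_F_translate (s : ℝ) (m : ℤ × ℤ) : ∑' n, F s (m + n) = ∑' n, F s n :=
  (Equiv.addLeft m).tsum_eq (fun n => F s n)

/-- The key pointwise convolution bound. -/
lemma pointwise_bound {t ε : ℝ} (ht0 : 0 < t) (ht2 : t ≤ 2) (hε0 : 0 < ε) (hεt : ε ≤ t)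
    (m n : ℤ × ℤ) :
    jb n ^ (-(2:ℝ)) * jb (m + n) ^ (-t) ≤
      2 ^ t * jb m ^ (-(t - ε)) * (jb n ^ (-(2 + ε)) + jb (m + n) ^ (-(2 + ε))) := by
  have pm := jb_pos m; have pn := jb_pos n; have pmn := jb_pos (m + n)
  have h2t : (0:ℝ) < 2 ^ t := Real.rpow_pos_of_pos two_pos t
  rcases le_or_gt (2 * jb n) (jb m) with hcase | hcase
  · -- small n : jb (m+n) ≥ jb m / 2
    have htri : jb m ≤ jb (m + n) + jb n := by
      have := jb_triangle (m + n) (-n)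
      simpa [jb_neg, add_assoc] using this
    have hhalf : jb m / 2 ≤ jb (m + n) := by linarith
    have hnm : jb n ≤ jb m := by linarith
    -- jb (m+n) ^ (-t) ≤ 2^t * jb m ^ (-t)
    have h1 : jb (m + n) ^ (-t) ≤ 2 ^ t * jb m ^ (-t) := by
      have := rpow_neg_le_rpow_neg (x := jb m / 2) (by linarith) hhalf ht0.le
      calc jb (m+n) ^ (-t) ≤ (jb m / 2) ^ (-t) := this
        _ = 2 ^ t * jb m ^ (-t) := by
            rw [Real.div_rpow pm.le (by norm_num), Real.rpow_neg (by norm_num : (0:ℝ) ≤ 2)]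
            field_simp
    -- jb n ^ (-2) ≤ jb m ^ ε * jb n ^ (-(2+ε))
    have h2 : jb n ^ (-(2:ℝ)) ≤ jb m ^ ε * jb n ^ (-(2 + ε)) := by
      have : jb n ^ (-(2:ℝ)) = jb n ^ ε * jb n ^ (-(2 + ε)) := by
        rw [← Real.rpow_add pn]; ring_nf
      rw [this]
      apply mul_le_mul_of_nonneg_right
        (Real.rpow_le_rpow pn.le hnm hε0.le) (Real.rpow_nonneg pn.le _)
    have hme : jb m ^ (-(t - ε)) = jb m ^ ε * jb m ^ (-t) := by
      rw [← Real.rpow_add pm]; ring_nf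
    calc jb n ^ (-(2:ℝ)) * jb (m + n) ^ (-t)
        ≤ (jb m ^ ε * jb n ^ (-(2 + ε))) * (2 ^ t * jb m ^ (-t)) := by
          apply mul_le_mul h2 h1 (Real.rpow_nonneg pmn.le _) (by positivity)
      _ = 2 ^ t * jb m ^ (-(t - ε)) * jb n ^ (-(2 + ε)) := by rw [hme]; ring
      _ ≤ _ := by
          apply mul_le_mul_of_nonneg_left _ (by positivity)
          exact le_add_of_nonneg_right (Real.rpow_nonneg pmn.le _)
  · -- large n : jb n ≥ jb m / 2
    have hhalf : jb m / 2 ≤ jb n := by linarith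
    have h1 : jb n ^ (-(t - ε)) ≤ 2 ^ t * jb m ^ (-(t - ε)) := by
      calc jb n ^ (-(t - ε)) ≤ (jb m / 2) ^ (-(t - ε)) :=
            rpow_neg_le_rpow_neg (by linarith) hhalf (by linarith)
        _ = 2 ^ (t - ε) * jb m ^ (-(t - ε)) := by
            rw [Real.div_rpow pm.le (by norm_num), Real.rpow_neg (by norm_num : (0:ℝ) ≤ 2)]
            field_simp
        _ ≤ 2 ^ t * jb m ^ (-(t - ε)) := by
            apply mul_le_mul_of_nonneg_right
              (Real.rpow_le_rpow_of_exponent_le one_le_two (by linarith))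
              (Real.rpow_nonneg pm.le _)
    have hsplit : jb n ^ (-(2:ℝ)) = jb n ^ (-(2 - t + ε)) * jb n ^ (-(t - ε)) := by
      rw [← Real.rpow_add pn]; ring_nf
    have h3 : jb n ^ (-(2 - t + ε)) * jb (m + n) ^ (-t) ≤
        jb n ^ (-(2 + ε)) + jb (m + n) ^ (-(2 + ε)) := by
      rcases le_total (jb n) (jb (m + n)) with hle | hle
      · have : jb (m + n) ^ (-t) ≤ jb n ^ (-t) := rpow_neg_le_rpow_neg pn hle ht0.le
        calc jb n ^ (-(2 - t + ε)) * jb (m + n) ^ (-t)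
            ≤ jb n ^ (-(2 - t + ε)) * jb n ^ (-t) :=
              mul_le_mul_of_nonneg_left this (Real.rpow_nonneg pn.le _)
          _ = jb n ^ (-(2 + ε)) := by rw [← Real.rpow_add pn]; ring_nf
          _ ≤ _ := le_add_of_nonneg_right (Real.rpow_nonneg pmn.le _)
      · have : jb n ^ (-(2 - t + ε)) ≤ jb (m + n) ^ (-(2 - t + ε)) :=
          rpow_neg_le_rpow_neg pmn hle (by linarith)
        calc jb n ^ (-(2 - t + ε)) * jb (m + n) ^ (-t)
            ≤ jb (m + n) ^ (-(2 - t + ε)) * jb (m + n) ^ (-t) :=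
              mul_le_mul_of_nonneg_right this (Real.rpow_nonneg pmn.le _)
          _ = jb (m + n) ^ (-(2 + ε)) := by rw [← Real.rpow_add pmn]; ring_nf
          _ ≤ _ := le_add_of_nonneg_left (Real.rpow_nonneg pn.le _)
    calc jb n ^ (-(2:ℝ)) * jb (m + n) ^ (-t)
        = (jb n ^ (-(t - ε)) * (jb n ^ (-(2 - t + ε)) * jb (m + n) ^ (-t))) := by
          rw [hsplit]; ring
      _ ≤ (2 ^ t * jb m ^ (-(t - ε))) * (jb n ^ (-(2 + ε)) + jb (m + n) ^ (-(2 + ε))) := by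
          apply mul_le_mul h1 h3 (by positivity) (by positivity)
      _ = _ := by ring

/-- The summed convolution estimate. -/
lemma conv_bound {t ε : ℝ} (ht0 : 0 < t) (ht2 : t ≤ 2) (hε0 : 0 < ε) (hεt : ε ≤ t)
    (m : ℤ × ℤ) :
    ∑' n, F 2 n * F t (m + n) ≤
      (ENNReal.ofReal (2 ^ t) * (2 * ∑' k, F (2 + ε) k)) * F (t - ε) m := by
  have step : ∀ n, F 2 n * F t (m + n) ≤
      ENNReal.ofReal (2 ^ t) * F (t - ε) m * (F (2 + ε) n + F (2 + ε) (m + n)) := by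
    intro n
    have hb := pointwise_bound ht0 ht2 hε0 hεt m n
    calc F 2 n * F t (m + n)
        = ENNReal.ofReal (jb n ^ (-(2:ℝ)) * jb (m + n) ^ (-t)) := by
          rw [ENNReal.ofReal_mul (Real.rpow_nonneg (jb_pos n).le _)]; rfl
      _ ≤ ENNReal.ofReal (2 ^ t * jb m ^ (-(t - ε)) *
            (jb n ^ (-(2 + ε)) + jb (m + n) ^ (-(2 + ε)))) := ENNReal.ofReal_le_ofReal hb
      _ = ENNReal.ofReal (2 ^ t) * F (t - ε) m * (F (2 + ε) n + F (2 + ε) (m + n)) := by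
          rw [ENNReal.ofReal_mul (mul_nonneg (by positivity)
              (Real.rpow_nonneg (jb_pos m).le _)), ENNReal.ofReal_mul
            (by positivity), ENNReal.ofReal_add (Real.rpow_nonneg (jb_pos n).le _)
            (Real.rpow_nonneg (jb_pos (m+n)).le _)]
          rfl
  calc ∑' n, F 2 n * F t (m + n)
      ≤ ∑' n, ENNReal.ofReal (2 ^ t) * F (t - ε) m * (F (2 + ε) n + F (2 + ε) (m + n)) :=
        ENNReal.tsum_le_tsum step
    _ = ENNReal.ofReal (2 ^ t) * F (t - ε) m *
        ((∑' n, F (2 + ε) n) + ∑' n, F (2 + ε) (m + n)) := by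
        rw [ENNReal.tsum_mul_left, ENNReal.tsum_add]
    _ = (ENNReal.ofReal (2 ^ t) * (2 * ∑' k, F (2 + ε) k)) * F (t - ε) m := by
        rw [tsum_F_translate, two_mul]; ring

lemma main_bound (k : ℕ) (t : ℝ) (ht0 : 0 < t) (ht2 : t ≤ 2) :
    ∃ C : ℝ≥0∞, C ≠ ⊤ ∧ ∀ m : ℤ × ℤ,
      ∑' n : Fin (k + 1) → ℤ × ℤ, (∏ j, F 2 (n j)) * F t (m + ∑ j, n j) ≤
        C * F (t / 2 ^ (k + 1)) m := by
  induction k generalizing t with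
  | zero =>
    refine ⟨ENNReal.ofReal (2 ^ t) * (2 * ∑' n, F (2 + t/2) n), ?_, ?_⟩
    · exact ENNReal.mul_ne_top ENNReal.ofReal_ne_top
        (ENNReal.mul_ne_top (by norm_num) (tsum_F_ne_top (by linarith)))
    · intro m
      have hre : ∑' n : Fin 1 → ℤ × ℤ, (∏ j, F 2 (n j)) * F t (m + ∑ j, n j) =
          ∑' a : ℤ × ℤ, F 2 a * F t (m + a) := by
        rw [← (Equiv.funUnique (Fin 1) (ℤ × ℤ)).symm.tsum_eq]
        congr 1; funext a
        simp
      rw [hre]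
      have := conv_bound ht0 ht2 (half_pos ht0) (by linarith) m
      simpa [show t - t/2 = t / 2^(0+1) by ring] using this
  | succ k ih =>
    obtain ⟨C, hC, hbound⟩ := ih t ht0 ht2
    set s := t / 2 ^ (k + 1) with hs
    have hs0 : 0 < s := by positivity
    have hs2 : s ≤ 2 := by
      have h1 : (1:ℝ) ≤ 2 ^ (k+1) := one_le_pow₀ one_le_two
      calc s ≤ t := by rw [hs]; exact div_le_self ht0.le h1
        _ ≤ 2 := ht2
    refine ⟨C * (ENNReal.ofReal (2 ^ s) * (2 * ∑' n, F (2 + s/2) n)), ?_, ?_⟩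
    · exact ENNReal.mul_ne_top hC (ENNReal.mul_ne_top ENNReal.ofReal_ne_top
        (ENNReal.mul_ne_top (by norm_num) (tsum_F_ne_top (by linarith))))
    · intro m
      have hre : ∑' n : Fin (k + 2) → ℤ × ℤ, (∏ j, F 2 (n j)) * F t (m + ∑ j, n j) =
          ∑' a : ℤ × ℤ, ∑' b : Fin (k + 1) → ℤ × ℤ,
            F 2 a * ((∏ j, F 2 (b j)) * F t ((m + a) + ∑ j, b j)) := by
        rw [← (Fin.consEquiv (fun _ : Fin (k+2) => ℤ × ℤ)).tsum_eq, ENNReal.tsum_prod']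
        congr 1; funext a; congr 1; funext b
        simp only [Fin.consEquiv_apply, Fin.prod_univ_succ, Fin.sum_univ_succ,
          Fin.cons_zero, Fin.cons_succ]
        rw [mul_assoc, add_assoc]
      rw [hre]
      calc ∑' a : ℤ × ℤ, ∑' b : Fin (k + 1) → ℤ × ℤ,
            F 2 a * ((∏ j, F 2 (b j)) * F t ((m + a) + ∑ j, b j))
          ≤ ∑' a : ℤ × ℤ, F 2 a * (C * F s (m + a)) := by
            apply ENNReal.tsum_le_tsum
            intro a
            rw [ENNReal.tsum_mul_left]
            exact mul_le_mul_right (hbound (m + a)) _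
        _ = C * ∑' a : ℤ × ℤ, F 2 a * F s (m + a) := by
            rw [← ENNReal.tsum_mul_left]
            congr 1; funext a; ring
        _ ≤ C * ((ENNReal.ofReal (2 ^ s) * (2 * ∑' n, F (2 + s/2) n)) * F (s - s/2) m) :=
            mul_le_mul_right (conv_bound hs0 hs2 (half_pos hs0) (by linarith) m) _
        _ = C * (ENNReal.ofReal (2 ^ s) * (2 * ∑' n, F (2 + s/2) n)) *
              F (t / 2 ^ (k + 2)) m := by
            rw [show s - s/2 = t / 2^(k+2) by rw [hs]; ring]
            ring

/-- For every integer `ℓ ≥ 1` and every `σ > 0`, the lattice sum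
`∑_{(n₁,…,n_ℓ)∈(ℤ²)^ℓ} ⟨n₁+⋯+n_ℓ⟩^{−2σ} ∏_j ⟨n_j⟩^{−2}` converges. -/
theorem lattice_convolution_summable (ℓ : ℕ) (hℓ : 1 ≤ ℓ) (σ : ℝ) (hσ : 0 < σ) :
    Summable (fun n : Fin ℓ → ℤ × ℤ =>
      jb (∑ j, n j) ^ (-(2 * σ)) * ∏ j, jb (n j) ^ (-(2:ℝ))) := by
  obtain ⟨k, rfl⟩ : ∃ k, ℓ = k + 1 := ⟨ℓ - 1, (Nat.succ_pred_eq_of_pos hℓ).symm⟩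
  set t := min (2 * σ) 2 with htdef
  have ht0 : 0 < t := lt_min (by linarith) two_pos
  have ht2 : t ≤ 2 := min_le_right _ _
  obtain ⟨C, hC, hb⟩ := main_bound k t ht0 ht2
  set f : (Fin (k + 1) → ℤ × ℤ) → ℝ := fun n =>
    jb (∑ j, n j) ^ (-(2 * σ)) * ∏ j, jb (n j) ^ (-(2:ℝ)) with hfdef
  have hnn : ∀ n, 0 ≤ f n := fun n =>
    mul_nonneg (Real.rpow_nonneg (jb_pos _).le _)
      (Finset.prod_nonneg fun j _ => Real.rpow_nonneg (jb_pos _).le _)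
  have hle : ∀ n : Fin (k + 1) → ℤ × ℤ, ENNReal.ofReal (f n) ≤
      (∏ j, F 2 (n j)) * F t (0 + ∑ j, n j) := by
    intro n
    rw [hfdef]
    rw [ENNReal.ofReal_mul (Real.rpow_nonneg (jb_pos _).le _)]
    have hprod : ENNReal.ofReal (∏ j, jb (n j) ^ (-(2:ℝ))) = ∏ j, F 2 (n j) := by
      rw [ENNReal.ofReal_prod_of_nonneg (fun i _ => Real.rpow_nonneg (jb_pos _).le _)]
      rfl
    rw [hprod, zero_add]
    calc ENNReal.ofReal (jb (∑ j, n j) ^ (-(2 * σ))) * ∏ j, F 2 (n j)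
        = (∏ j, F 2 (n j)) * F (2 * σ) (∑ j, n j) := by rw [mul_comm]; rfl
      _ ≤ (∏ j, F 2 (n j)) * F t (∑ j, n j) :=
          mul_le_mul_right (F_mono (min_le_left _ _) _) _
  have hfin : ∑' n, ENNReal.ofReal (f n) ≠ ⊤ := by
    apply ne_top_of_le_ne_top (ENNReal.mul_ne_top hC (F_ne_top _ 0))
    exact le_trans (ENNReal.tsum_le_tsum hle) (hb 0)
  exact (ENNReal.summable_toReal hfin).congr
    (fun n => by rw [ENNReal.toReal_ofReal (hnn n)])
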